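/- For integers i ≥ 0 and elements A, B, M of a commutative ring, ∑_{j=0}^{i} ∑_{k=0}^{j} binom(i,j)·binom(j,k)·binom(M+j,k)·k!·(-1)^{i-j}·A^k·B^j = (-1)^i · ∑_{k=0}^{i} binom(i,k)·(-AB)^k·k!·∑_{j=0}^{k} binom(M+k,k-j)·binom(i-k,j)·(1-B)^{i-k-j}·(-B)^j. -/

import Mathlib

/-- The generalized binomial coefficient `binom(x,k) = x(x-1)⋯(x-k+1)/k!` for an element
`x` of a commutative `ℚ`-algebra. -/
noncomputable def genBinom {S : Type*} [CommRing S] [Algebra ℚ S] (x : S) (k : ℕ) : S :=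
  algebraMap ℚ S ((k.factorial : ℚ))⁻¹ * ∏ t ∈ Finset.range k, (x - (t : S))

open Finset

section AUX
variable {S : Type*} [CommRing S] [Algebra ℚ S]

noncomputable local instance : Module ℚ≥0 S := Module.compHom S (NNRat.coeHom : ℚ≥0 →+* ℚ)

lemma fact_unit (k : ℕ) : algebraMap ℚ S ((k.factorial : ℚ))⁻¹ * (k.factorial : S) = 1 := by
  rw [← map_natCast (algebraMap ℚ S) k.factorial, ← map_mul,
    inv_mul_cancel₀ (by exact_mod_cast k.factorial_ne_zero), map_one]

lemma descPoch_eq (x : S) (k : ℕ) :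
    (descPochhammer ℤ k).smeval x = ∏ t ∈ Finset.range k, (x - (t : S)) := by
  induction k with
  | zero => simp
  | succ n ih => rw [descPochhammer_succ_right, Polynomial.smeval_mul, ih, Finset.prod_range_succ]
                 simp [Polynomial.smeval_sub, Polynomial.smeval_natCast]

lemma genBinom_eq (x : S) (k : ℕ) : genBinom x k = Ring.choose x k := by
  have key : (k.factorial : S) * genBinom x k = (k.factorial : S) * Ring.choose x k := by
    rw [genBinom, ← mul_assoc, mul_comm ((k.factorial : S)), fact_unit, one_mul,
      ← descPoch_eq, Ring.descPochhammer_eq_factorial_smul_choose, nsmul_eq_mul]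
  calc genBinom x k = algebraMap ℚ S ((k.factorial : ℚ))⁻¹ * ((k.factorial : S) * genBinom x k) := by
        rw [← mul_assoc, fact_unit, one_mul]
    _ = Ring.choose x k := by rw [key, ← mul_assoc, fact_unit, one_mul]

lemma genBinom_vandermonde (x : S) (s k : ℕ) :
    genBinom (x + (s : S)) k = ∑ j ∈ range (k + 1), genBinom x (k - j) * (s.choose j : S) := by
  rw [genBinom_eq, Ring.add_choose_eq k (Commute.all _ _),
    Finset.Nat.sum_antidiagonal_eq_sum_range_succ_mk, ← Finset.sum_range_reflect]
  refine Finset.sum_congr rfl fun j hj => ?_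
  rw [mem_range] at hj
  simp only [Nat.succ_sub_one]
  rw [Nat.sub_sub_self (by omega : j ≤ k), genBinom_eq, Ring.choose_natCast, mul_comm]

omit [Algebra ℚ S] in
lemma neg_one_pow_sub {t m : ℕ} (h : t ≤ m) : (-1 : S) ^ (m - t) = (-1 : S) ^ (t + m) := by
  rw [show t + m = (m - t) + 2 * t by omega, pow_add, pow_mul]
  simp

omit [Algebra ℚ S] in
lemma innerChooseSum (B : S) (n j : ℕ) :
    ∑ s ∈ range (n + 1), (n.choose s : S) * (s.choose j : S) * (-1 : S) ^ (n - s) * B ^ s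
      = (-1 : S) ^ n * (n.choose j : S) * (1 - B) ^ (n - j) * (-B) ^ j := by
  by_cases hj : j ≤ n
  · have h1 : ∑ s ∈ range (n + 1), (n.choose s : S) * (s.choose j : S) * (-1 : S) ^ (n - s) * B ^ s
        = ∑ s ∈ Ico j (n + 1), (n.choose s : S) * (s.choose j : S) * (-1 : S) ^ (n - s) * B ^ s := by
      refine (Finset.sum_subset (by rw [Finset.range_eq_Ico]; exact Finset.Ico_subset_Ico (by omega) le_rfl)
        fun s hs hns => ?_).symm
      have : s < j := by simp only [mem_range, mem_Ico] at hs hns; omega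
      rw [Nat.choose_eq_zero_of_lt this]; push_cast; ring
    rw [h1, Finset.sum_Ico_eq_sum_range, show n + 1 - j = (n - j) + 1 by omega]
    have h3 : ∀ t ∈ range (n - j + 1),
        (n.choose (j + t) : S) * ((j + t).choose j : S) * (-1 : S) ^ (n - (j + t)) * B ^ (j + t)
        = ((n.choose j : S) * B ^ j) *
          ((-1 : S) ^ (t + (n - j)) * B ^ t * (1 : S) ^ ((n - j) - t) * ((n - j).choose t : S)) := by
      intro t ht
      rw [mem_range] at ht
      have hmul : (n.choose (j + t)) * ((j + t).choose j) = (n.choose j) * ((n - j).choose t) := by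
        have := Nat.choose_mul (n := n) (show j ≤ j + t by omega)
        simpa [Nat.add_sub_cancel_left] using this
      have hc : ((n.choose (j + t)) : S) * ((j + t).choose j : S)
          = (n.choose j : S) * ((n - j).choose t : S) := by exact_mod_cast congrArg (Nat.cast : ℕ → S) hmul
      have hsign : (-1 : S) ^ (n - (j + t)) = (-1 : S) ^ (t + (n - j)) := by
        rw [show n - (j + t) = (n - j) - t by omega, neg_one_pow_sub (by omega)]
      rw [hsign, pow_add B j t]
      calc (n.choose (j + t) : S) * ((j + t).choose j : S) * (-1 : S) ^ (t + (n-j)) * (B ^ j * B ^ t)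
          = ((n.choose (j+t) : S) * ((j + t).choose j : S)) * ((-1:S) ^ (t + (n-j)) * (B ^ j * B ^ t)) := by ring
        _ = _ := by rw [hc]; ring
    rw [Finset.sum_congr rfl h3, ← Finset.mul_sum, ← sub_pow B 1 (n - j)]
    have hBm : (B - 1) ^ (n - j) = (-1 : S) ^ (n - j) * (1 - B) ^ (n - j) := by
      rw [← neg_sub, neg_pow]
    rw [hBm, neg_one_pow_sub hj, pow_add, neg_pow B j]
    ring
  · have h0 : ∀ s ∈ range (n + 1),
        (n.choose s : S) * (s.choose j : S) * (-1 : S) ^ (n - s) * B ^ s = 0 := by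
      intro s hs
      rw [mem_range] at hs
      rw [Nat.choose_eq_zero_of_lt (by omega : s < j)]; push_cast; ring
    rw [Finset.sum_congr rfl h0, Finset.sum_const_zero, Nat.choose_eq_zero_of_lt (by omega : n < j)]
    push_cast; ring

lemma keySum (x B : S) (n k : ℕ) :
    ∑ s ∈ range (n + 1), (n.choose s : S) * genBinom (x + (s : S)) k * (-1 : S) ^ (n - s) * B ^ s
      = (-1 : S) ^ n * ∑ j ∈ range (k + 1),
          genBinom x (k - j) * (n.choose j : S) * (1 - B) ^ (n - j) * (-B) ^ j := by
  have step : ∀ s ∈ range (n + 1),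
      (n.choose s : S) * genBinom (x + (s : S)) k * (-1 : S) ^ (n - s) * B ^ s
      = ∑ j ∈ range (k + 1),
          genBinom x (k - j) * ((n.choose s : S) * (s.choose j : S) * (-1 : S) ^ (n - s) * B ^ s) := by
    intro s _
    rw [genBinom_vandermonde, Finset.mul_sum, Finset.sum_mul, Finset.sum_mul]
    exact Finset.sum_congr rfl fun j _ => by ring
  rw [Finset.sum_congr rfl step, Finset.sum_comm, Finset.mul_sum]
  refine Finset.sum_congr rfl fun j hj => ?_
  rw [← Finset.mul_sum, innerChooseSum]
  ring

end AUX


/-- For integers `i ≥ 0` and elements `A`, `B`, `M` of a commutative `ℚ`-algebra: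
`∑_{j=0}^{i} ∑_{k=0}^{j} binom(i,j)·binom(j,k)·binom(M+j,k)·k!·(-1)^{i-j}·A^k·B^j
 = (-1)^i · ∑_{k=0}^{i} binom(i,k)·(-AB)^k·k!·
     ∑_{j=0}^{k} binom(M+k,k-j)·binom(i-k,j)·(1-B)^{i-k-j}·(-B)^j`. -/
theorem binomial_double_sum_identity {S : Type*} [CommRing S] [Algebra ℚ S]
    (M A B : S) (i : ℕ) :
    (∑ j ∈ Finset.range (i + 1), ∑ k ∈ Finset.range (j + 1),
        (i.choose j : S) * (j.choose k : S) * genBinom (M + (j : S)) k *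
          (k.factorial : S) * (-1 : S) ^ (i - j) * A ^ k * B ^ j)
      = (-1 : S) ^ i * ∑ k ∈ Finset.range (i + 1),
          (i.choose k : S) * (-(A * B)) ^ k * (k.factorial : S) *
            ∑ j ∈ Finset.range (k + 1),
              genBinom (M + (k : S)) (k - j) * ((i - k).choose j : S) *
                (1 - B) ^ (i - k - j) * (-B) ^ j := by
  have hL1 : (∑ j ∈ Finset.range (i + 1), ∑ k ∈ Finset.range (j + 1),
        (i.choose j : S) * (j.choose k : S) * genBinom (M + (j : S)) k *
          (k.factorial : S) * (-1 : S) ^ (i - j) * A ^ k * B ^ j)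
      = ∑ j ∈ Finset.range (i + 1), ∑ k ∈ Finset.range (i + 1),
        (i.choose j : S) * (j.choose k : S) * genBinom (M + (j : S)) k *
          (k.factorial : S) * (-1 : S) ^ (i - j) * A ^ k * B ^ j := by
    refine Finset.sum_congr rfl fun j hj => ?_
    rw [mem_range] at hj
    refine Finset.sum_subset (Finset.range_subset_range.mpr (by omega)) fun k _ hk => ?_
    rw [mem_range, not_lt] at hk
    rw [Nat.choose_eq_zero_of_lt (by omega : j < k)]
    push_cast; ring
  rw [hL1, Finset.sum_comm, Finset.mul_sum]
  refine Finset.sum_congr rfl fun k hk => ?_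
  rw [mem_range] at hk
  have hki : k ≤ i := by omega
  have h2 : ∑ j ∈ Finset.range (i + 1),
        (i.choose j : S) * (j.choose k : S) * genBinom (M + (j : S)) k *
          (k.factorial : S) * (-1 : S) ^ (i - j) * A ^ k * B ^ j
      = ∑ j ∈ Ico k (i + 1),
        (i.choose j : S) * (j.choose k : S) * genBinom (M + (j : S)) k *
          (k.factorial : S) * (-1 : S) ^ (i - j) * A ^ k * B ^ j := by
    refine (Finset.sum_subset (by rw [Finset.range_eq_Ico]; exact Finset.Ico_subset_Ico (by omega) le_rfl)
      fun j hjr hj => ?_).symm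
    rw [mem_range] at hjr
    rw [mem_Ico] at hj
    rw [Nat.choose_eq_zero_of_lt (by omega : j < k)]
    push_cast; ring
  rw [h2, Finset.sum_Ico_eq_sum_range, show i + 1 - k = (i - k) + 1 by omega]
  have h3 : ∀ s ∈ range ((i - k) + 1),
      (i.choose (k + s) : S) * ((k + s).choose k : S) * genBinom (M + ((k + s : ℕ) : S)) k *
        (k.factorial : S) * (-1 : S) ^ (i - (k + s)) * A ^ k * B ^ (k + s)
      = ((i.choose k : S) * A ^ k * B ^ k * (k.factorial : S)) *
        (((i - k).choose s : S) * genBinom ((M + (k : S)) + (s : S)) k *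
          (-1 : S) ^ ((i - k) - s) * B ^ s) := by
    intro s hs
    rw [mem_range] at hs
    have hmul : (i.choose (k + s)) * ((k + s).choose k) = (i.choose k) * ((i - k).choose s) := by
      have := Nat.choose_mul (n := i) (show k ≤ k + s by omega)
      simpa [Nat.add_sub_cancel_left] using this
    have hc : ((i.choose (k + s)) : S) * ((k + s).choose k : S)
        = (i.choose k : S) * ((i - k).choose s : S) := by exact_mod_cast congrArg (Nat.cast : ℕ → S) hmul
    have hcast : (M + ((k + s : ℕ) : S)) = (M + (k : S)) + (s : S) := by push_cast; ring
    rw [hcast, show i - (k + s) = (i - k) - s by omega, pow_add B k s]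
    calc (i.choose (k + s) : S) * ((k + s).choose k : S) * genBinom ((M + (k:S)) + (s:S)) k *
          (k.factorial : S) * (-1 : S) ^ ((i-k) - s) * A ^ k * (B ^ k * B ^ s)
        = ((i.choose (k + s) : S) * ((k + s).choose k : S)) * (genBinom ((M + (k:S)) + (s:S)) k *
          (k.factorial : S) * (-1 : S) ^ ((i-k) - s) * A ^ k * (B ^ k * B ^ s)) := by ring
      _ = _ := by rw [hc]; ring
  rw [Finset.sum_congr rfl h3, ← Finset.mul_sum, keySum (M + (k : S)) B (i - k) k]
  rw [neg_pow (A * B) k, mul_pow]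
  rw [show (-1 : S) ^ (i - k) = (-1 : S) ^ (k + i) from neg_one_pow_sub hki, pow_add]
  ring
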